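/- Let φ be a propositional formula, H = {h_1,...,h_n} a set of variables of φ, q a variable with q ∉ H, and s, t, f fresh variables. Define Δ = {(h_i ∨ ¬t), (¬h_i ∨ f) : 1 ≤ i ≤ n} ∪ {φ} ∪ {ψ} where ψ = (s ↔ q), and α = (s ∨ ¬t ∨ f). Assume φ is both 0-valid and 1-valid. Then the following are equivalent: (1) there exists a set E of literals over H such that φ ∧ ⋀E is satisfiable and φ ∧ ⋀E ⊨ q; (2) there exists Φ ⊆ Δ with ψ ∈ Φ such that Φ is consistent, Φ ⊨ α, and no proper subset of Φ entails α. -/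

import Mathlib

inductive PropForm (α : Type) where
  | var : α → PropForm α
  | tru : PropForm α
  | fls : PropForm α
  | not : PropForm α → PropForm α
  | and : PropForm α → PropForm α → PropForm α
  | or : PropForm α → PropForm α → PropForm α
  deriving DecidableEq

def PropForm.eval {α : Type} (v : α → Bool) : PropForm α → Bool
  | .var a => v a
  | .tru => true
  | .fls => false
  | .not φ => !(PropForm.eval v φ)
  | .and φ ψ => PropForm.eval v φ && PropForm.eval v ψ
  | .or φ ψ => PropForm.eval v φ || PropForm.eval v ψ

/-- `v` satisfies every formula in `Φ`. -/
def Models {α : Type} (Φ : Set (PropForm α)) (v : α → Bool) : Prop :=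
  ∀ φ ∈ Φ, PropForm.eval v φ = true

/-- `Φ` entails `ψ`. -/
def Entails {α : Type} (Φ : Set (PropForm α)) (ψ : PropForm α) : Prop :=
  ∀ v : α → Bool, Models Φ v → PropForm.eval v ψ = true

/-- `Φ` is consistent. -/
def Consistent {α : Type} (Φ : Set (PropForm α)) : Prop :=
  ∃ v : α → Bool, Models Φ v

/-- Conjunction of a list of formulae. -/
def bigAnd {α : Type} (L : List (PropForm α)) : PropForm α :=
  L.foldr PropForm.and PropForm.tru

/-- The set of variables occurring in a formula. -/
def varsOf : PropForm ℕ → Finset ℕ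
  | .var a => {a}
  | .tru => ∅
  | .fls => ∅
  | .not φ => varsOf φ
  | .and φ ψ => varsOf φ ∪ varsOf ψ
  | .or φ ψ => varsOf φ ∪ varsOf ψ
@[simp] lemma varsOf_var (a : ℕ) : varsOf (.var a) = {a} := rfl
@[simp] lemma varsOf_not (φ : PropForm ℕ) : varsOf (.not φ) = varsOf φ := rfl
@[simp] lemma varsOf_and (φ ψ : PropForm ℕ) : varsOf (.and φ ψ) = varsOf φ ∪ varsOf ψ := rfl
@[simp] lemma varsOf_or (φ ψ : PropForm ℕ) : varsOf (.or φ ψ) = varsOf φ ∪ varsOf ψ := rfl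

lemma eval_congr (v w : ℕ → Bool) (φ : PropForm ℕ)
    (h : ∀ x ∈ varsOf φ, v x = w x) : φ.eval v = φ.eval w := by
  induction φ with
  | var a => exact h a (by simp)
  | tru => rfl
  | fls => rfl
  | not ψ ih =>
      simp only [PropForm.eval]
      rw [ih (fun x hx => h x (by simpa using hx))]
  | and ψ χ ih1 ih2 =>
      simp only [PropForm.eval]
      rw [ih1 (fun x hx => h x (by simp [hx])), ih2 (fun x hx => h x (by simp [hx]))]
  | or ψ χ ih1 ih2 =>
      simp only [PropForm.eval]
      rw [ih1 (fun x hx => h x (by simp [hx])), ih2 (fun x hx => h x (by simp [hx]))]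

lemma exists_minimal_finset {β : Type} [DecidableEq β] (P : Finset β → Prop)
    (E : Finset β) (hE : P E) :
    ∃ E', E' ⊆ E ∧ P E' ∧ ∀ E'', E'' ⊂ E' → ¬ P E'' := by
  induction E using Finset.strongInduction with
  | _ E ih =>
    by_cases h : ∃ E'', E'' ⊂ E ∧ P E''
    · obtain ⟨E'', hsub, hP⟩ := h
      obtain ⟨E', h1, h2, h3⟩ := ih E'' hsub hP
      exact ⟨E', h1.trans hsub.subset, h2, h3⟩
    · exact ⟨E, subset_rfl, hE, fun E'' hsub hP => h ⟨E'', hsub, hP⟩⟩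

def clauseOf (t f : ℕ) : ℕ × Bool → PropForm ℕ
  | (h, true) => .or (.var h) (.not (.var t))
  | (h, false) => .or (.not (.var h)) (.var f)

@[simp] lemma clauseOf_true (t f h : ℕ) :
    clauseOf t f (h, true) = .or (.var h) (.not (.var t)) := rfl
@[simp] lemma clauseOf_false (t f h : ℕ) :
    clauseOf t f (h, false) = .or (.not (.var h)) (.var f) := rfl
/-- Reduction from positive-literals-unrestricted abduction to argument relevance:
with `ψ = (s ↔ q)`, `Δ = {(h ∨ ¬t), (¬h ∨ f) : h ∈ H} ∪ {φ, ψ}` and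
`α = (s ∨ ¬t ∨ f)`, and `φ` both 0-valid and 1-valid, there is an explanation `E`
of literals over `H` iff there is a minimal support `Φ ⊆ Δ` for `α` with `ψ ∈ Φ`. -/
theorem stmt17 (φ : PropForm ℕ) (H : Finset ℕ) (q s t f : ℕ)
    (hH : H ⊆ varsOf φ) (hq : q ∉ H)
    (hs : s ∉ varsOf φ) (ht : t ∉ varsOf φ) (hf : f ∉ varsOf φ)
    (hsH : s ∉ H) (htH : t ∉ H) (hfH : f ∉ H)
    (hst : s ≠ t) (hsf : s ≠ f) (htf : t ≠ f)
    (hsq : s ≠ q) (htq : t ≠ q) (hfq : f ≠ q)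
    (h0 : PropForm.eval (fun _ => false) φ = true)
    (h1 : PropForm.eval (fun _ => true) φ = true) :
    (∃ E : Finset (ℕ × Bool), (∀ l ∈ E, l.1 ∈ H) ∧
        (∃ v : ℕ → Bool, PropForm.eval v φ = true ∧ ∀ l ∈ E, v l.1 = l.2) ∧
        (∀ v : ℕ → Bool, PropForm.eval v φ = true → (∀ l ∈ E, v l.1 = l.2) → v q = true))
    ↔ (∃ Φ : Set (PropForm ℕ),
        Φ ⊆ ({χ | ∃ h ∈ H, χ = PropForm.or (.var h) (.not (.var t))}
             ∪ {χ | ∃ h ∈ H, χ = PropForm.or (.not (.var h)) (.var f)}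
             ∪ {φ, PropForm.or (.and (.var s) (.var q)) (.and (.not (.var s)) (.not (.var q)))}) ∧
        (PropForm.or (.and (.var s) (.var q)) (.and (.not (.var s)) (.not (.var q)))) ∈ Φ ∧
        Consistent Φ ∧
        Entails Φ (PropForm.or (.var s) (.or (.not (.var t)) (.var f))) ∧
        ∀ Φ' ⊂ Φ, ¬ Entails Φ' (PropForm.or (.var s) (.or (.not (.var t)) (.var f)))) := by
  classical
  set ψ : PropForm ℕ :=
    PropForm.or (.and (.var s) (.var q)) (.and (.not (.var s)) (.not (.var q))) with hψdef
  set α : PropForm ℕ := PropForm.or (.var s) (.or (.not (.var t)) (.var f)) with hαdef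
  have hφψ : φ ≠ ψ := by
    intro h
    apply hs; rw [h, hψdef]; simp
  constructor
  · -- forward direction
    rintro ⟨E0, hE0H, ⟨v0, hv0φ, hv0E0⟩, hE0ent⟩
    obtain ⟨E, hEsub, hEent, hEmin⟩ := exists_minimal_finset
      (fun E' => ∀ v : ℕ → Bool, PropForm.eval v φ = true →
        (∀ l ∈ E', v l.1 = l.2) → v q = true) E0 hE0ent
    have hEH : ∀ l ∈ E, l.1 ∈ H := fun l hl => hE0H l (hEsub hl)
    have hv0E : ∀ l ∈ E, v0 l.1 = l.2 := fun l hl => hv0E0 l (hEsub hl)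
    have hnoconf : ∀ h : ℕ, (h, true) ∈ E → (h, false) ∈ E → False := by
      intro h h1 h2
      have e1 := hv0E _ h1
      have e2 := hv0E _ h2
      simp at e1 e2
      rw [e1] at e2; exact Bool.true_eq_false.mp e2
    refine ⟨({φ, ψ} : Set (PropForm ℕ)) ∪ {χ | ∃ l ∈ E, χ = clauseOf t f l}, ?_, ?_, ?_, ?_, ?_⟩
    · -- subset of Δ
      rintro χ (hχ | ⟨⟨h, b⟩, hl, rfl⟩)
      · exact Set.mem_union_right _ hχ
      · cases b
        · exact Set.mem_union_left _ (Set.mem_union_right _ ⟨h, hEH _ hl, rfl⟩)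
        · exact Set.mem_union_left _ (Set.mem_union_left _ ⟨h, hEH _ hl, rfl⟩)
    · exact Set.mem_union_left _ (Set.mem_insert_iff.mpr (Or.inr rfl))
    · -- consistent
      refine ⟨fun y => if y = s then v0 q else if y = t then true
        else if y = f then true else v0 y, ?_⟩
      rintro χ (hχ | ⟨⟨h, b⟩, hl, rfl⟩)
      · rcases hχ with rfl | rfl
        · rw [eval_congr _ v0]
          · exact hv0φ
          · intro x hx
            have hxs : x ≠ s := fun e => hs (e ▸ hx)
            have hxt : x ≠ t := fun e => ht (e ▸ hx)
            have hxf : x ≠ f := fun e => hf (e ▸ hx)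
            simp [hxs, hxt, hxf]
        · simp only [hψdef, PropForm.eval]
          simp only [if_pos rfl, if_neg (Ne.symm hsq), if_neg (Ne.symm htq),
            if_neg (Ne.symm hfq)]
          cases v0 q <;> simp
      · have hhH : h ∈ H := hEH _ hl
        have hhs : h ≠ s := fun e => hsH (e ▸ hhH)
        have hht : h ≠ t := fun e => htH (e ▸ hhH)
        have hhf : h ≠ f := fun e => hfH (e ▸ hhH)
        cases b
        · simp only [clauseOf_false, PropForm.eval]
          simp [Ne.symm hsf, Ne.symm htf]
        · simp only [clauseOf_true, PropForm.eval]
          have := hv0E _ hl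
          simp at this
          simp [hhs, hht, hhf, this]
    · -- entails α
      intro v hv
      have hφv : PropForm.eval v φ = true := hv φ (Or.inl (Or.inl rfl))
      have hψv : PropForm.eval v ψ = true := hv ψ (Or.inl (Or.inr rfl))
      by_cases hvt : v t = true
      · by_cases hvf : v f = true
        · simp [hαdef, PropForm.eval, hvf]
        · have hvf' : v f = false := by simpa using hvf
          have hsatE : ∀ l ∈ E, v l.1 = l.2 := by
            rintro ⟨h, b⟩ hl
            have hc := hv (clauseOf t f (h, b)) (Or.inr ⟨(h, b), hl, rfl⟩)
            cases b
            · simp only [clauseOf_false, PropForm.eval] at hc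
              simp [hvf'] at hc
              simpa using hc
            · simp only [clauseOf_true, PropForm.eval] at hc
              simp [hvt] at hc
              simpa using hc
          have hvq := hEent v hφv hsatE
          simp only [hψdef, PropForm.eval] at hψv
          simp [hvq] at hψv
          simp [hαdef, PropForm.eval, hψv]
      · have : v t = false := by simpa using hvt
        simp [hαdef, PropForm.eval, this]
    · -- minimality
      intro Φ' hΦ' hent'
      obtain ⟨x, hxΦ, hxΦ'⟩ := Set.exists_of_ssubset hΦ'
      have hsub' := hΦ'.subset
      rcases hxΦ with (rfl | rfl) | ⟨l, hlE, rfl⟩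
      · -- φ missing
        set va : ℕ → Bool := fun y => if y = t then true
          else if (y, true) ∈ E then true else false with hva
        have hvas : va s = false := by
          have : (s, true) ∉ E := fun h => hsH (hEH _ h)
          simp [hva, hst, this]
        have hvat : va t = true := by simp [hva]
        have hvaf : va f = false := by
          have : (f, true) ∉ E := fun h => hfH (hEH _ h)
          simp [hva, Ne.symm htf, this]
        have hvaq : va q = false := by
          have : (q, true) ∉ E := fun h => hq (hEH _ h)
          simp [hva, Ne.symm htq, this]
        have hmod : Models Φ' va := by
          intro χ hχ
          rcases hsub' hχ with (rfl | rfl) | ⟨⟨h, b⟩, hl, rfl⟩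
          · exact absurd hχ hxΦ'
          · simp only [hψdef, PropForm.eval]
            simp [hvas, hvaq]
          · have hht : h ≠ t := fun e => htH (e ▸ hEH _ hl)
            cases b
            · have : (h, true) ∉ E := fun h' => hnoconf h h' hl
              simp only [clauseOf_false, PropForm.eval]
              simp [hva, hht, this, hvaf]
            · simp only [clauseOf_true, PropForm.eval]
              simp [hva, hht, hl]
        have := hent' va hmod
        simp [hαdef, PropForm.eval, hvas, hvat, hvaf] at this
      · -- ψ missing
        set vb : ℕ → Bool := fun y => if y = s then false else if y = t then true
          else if y = f then false else v0 y with hvb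
        have hmod : Models Φ' vb := by
          intro χ hχ
          rcases hsub' hχ with (rfl | rfl) | ⟨⟨h, b⟩, hl, rfl⟩
          · rw [eval_congr _ v0]
            · exact hv0φ
            · intro x hx
              have hxs : x ≠ s := fun e => hs (e ▸ hx)
              have hxt : x ≠ t := fun e => ht (e ▸ hx)
              have hxf : x ≠ f := fun e => hf (e ▸ hx)
              simp [hvb, hxs, hxt, hxf]
          · exact absurd hχ hxΦ'
          · have hhH : h ∈ H := hEH _ hl
            have hhs : h ≠ s := fun e => hsH (e ▸ hhH)
            have hht : h ≠ t := fun e => htH (e ▸ hhH)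
            have hhf : h ≠ f := fun e => hfH (e ▸ hhH)
            have hvE := hv0E _ hl
            cases b
            · simp at hvE
              simp only [clauseOf_false, PropForm.eval]
              simp [hvb, hhs, hht, hhf, hvE]
            · simp at hvE
              simp only [clauseOf_true, PropForm.eval]
              simp [hvb, hhs, hht, hhf, hvE]
        have := hent' vb hmod
        simp [hαdef, PropForm.eval, hvb, Ne.symm hst, Ne.symm hsf, Ne.symm htf] at this
      · -- a clause missing
        have hne : ¬ (∀ v : ℕ → Bool, PropForm.eval v φ = true →
            (∀ l' ∈ E.erase l, v l'.1 = l'.2) → v q = true) :=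
          hEmin (E.erase l) (Finset.erase_ssubset hlE)
        push_neg at hne
        obtain ⟨v1, hv1φ, hv1E, hv1q⟩ := hne
        have hv1q' : v1 q = false := by simpa using hv1q
        set vc : ℕ → Bool := fun y => if y = s then false else if y = t then true
          else if y = f then false else v1 y with hvc
        have hvcq : vc q = false := by
          simp [hvc, Ne.symm hsq, Ne.symm htq, Ne.symm hfq, hv1q']
        have hmod : Models Φ' vc := by
          intro χ hχ
          rcases hsub' hχ with (rfl | rfl) | ⟨⟨h, b⟩, hl, rfl⟩
          · rw [eval_congr _ v1]
            · exact hv1φ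
            · intro x hx
              have hxs : x ≠ s := fun e => hs (e ▸ hx)
              have hxt : x ≠ t := fun e => ht (e ▸ hx)
              have hxf : x ≠ f := fun e => hf (e ▸ hx)
              simp [hvc, hxs, hxt, hxf]
          · simp only [hψdef, PropForm.eval]
            have hvcs : vc s = false := by simp [hvc]
            simp [hvcs, hvcq]
          · have hll : (h, b) ≠ l := by
              rintro rfl; exact hxΦ' hχ
            have hmem : (h, b) ∈ E.erase l := Finset.mem_erase.mpr ⟨hll, hl⟩
            have hvE := hv1E _ hmem
            have hhH : h ∈ H := hEH _ hl
            have hhs : h ≠ s := fun e => hsH (e ▸ hhH)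
            have hht : h ≠ t := fun e => htH (e ▸ hhH)
            have hhf : h ≠ f := fun e => hfH (e ▸ hhH)
            cases b
            · simp at hvE
              simp only [clauseOf_false, PropForm.eval]
              simp [hvc, hhs, hht, hhf, hvE]
            · simp at hvE
              simp only [clauseOf_true, PropForm.eval]
              simp [hvc, hhs, hht, hhf, hvE]
        have := hent' vc hmod
        simp [hαdef, PropForm.eval, hvc, Ne.symm hst, Ne.symm hsf, Ne.symm htf] at this
  · -- backward direction
    rintro ⟨Φ, hΦΔ, hψΦ, hcons, hΦent, hΦmin⟩
    have hclass : ∀ χ ∈ Φ, (∃ h ∈ H, χ = clauseOf t f (h, true)) ∨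
        (∃ h ∈ H, χ = clauseOf t f (h, false)) ∨ χ = φ ∨ χ = ψ := by
      intro χ hχ
      have h' := hΦΔ hχ
      simp only [Set.mem_union, Set.mem_setOf_eq, Set.mem_insert_iff,
        Set.mem_singleton_iff] at h'
      rcases h' with (h' | h') | (h' | h')
      · left; simpa using h'
      · right; left; simpa using h'
      · right; right; left; exact h'
      · right; right; right; exact h'
    -- no conflicting pair of clauses
    have hconf : ∀ h : ℕ, clauseOf t f (h, true) ∈ Φ →
        clauseOf t f (h, false) ∈ Φ → False := by
      intro h h1 h2
      have hsub : ({clauseOf t f (h, true), clauseOf t f (h, false)} : Set (PropForm ℕ)) ⊆ Φ := by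
        rintro χ (rfl | rfl)
        · exact h1
        · exact h2
      have hψnot : ψ ∉ ({clauseOf t f (h, true), clauseOf t f (h, false)} : Set (PropForm ℕ)) := by
        simp [hψdef]
      have hss : ({clauseOf t f (h, true), clauseOf t f (h, false)} : Set (PropForm ℕ)) ⊂ Φ :=
        (Set.ssubset_iff_of_subset hsub).2 ⟨ψ, hψΦ, hψnot⟩
      refine hΦmin _ hss ?_
      intro v hv
      have c1 := hv _ (Or.inl rfl)
      have c2 := hv _ (Or.inr rfl)
      simp only [clauseOf_true, clauseOf_false, PropForm.eval] at c1 c2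
      simp only [hαdef, PropForm.eval]
      cases hvt : v t
      · simp [hvt]
      · cases hvf : v f
        · simp [hvt, hvf] at c1 c2
          rw [c1] at c2; exact absurd c2 (by simp)
        · simp [hvf]
    -- the candidate explanation
    set E : Finset (ℕ × Bool) :=
      (H.filter (fun h => clauseOf t f (h, true) ∈ Φ)).image (fun h => (h, true)) ∪
      (H.filter (fun h => clauseOf t f (h, false) ∈ Φ)).image (fun h => (h, false)) with hEdef
    have hmemE : ∀ (h : ℕ) (b : Bool), (h, b) ∈ E ↔ (h ∈ H ∧ clauseOf t f (h, b) ∈ Φ) := by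
      intro h b
      cases b <;> simp [hEdef] <;> exact Finset.mem_filter
    have hEH : ∀ l ∈ E, l.1 ∈ H := by
      rintro ⟨h, b⟩ hl
      exact ((hmemE h b).1 hl).1
    -- φ belongs to Φ
    have hφΦ : φ ∈ Φ := by
      by_contra hφΦ
      set v : ℕ → Bool := fun y => if y = t then true
        else if (y, true) ∈ E then true else false with hv
      have hvs : v s = false := by
        have : (s, true) ∉ E := fun h => hsH (hEH _ h)
        simp [hv, hst, this]
      have hvt : v t = true := by simp [hv]
      have hvf : v f = false := by
        have : (f, true) ∉ E := fun h => hfH (hEH _ h)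
        simp [hv, Ne.symm htf, this]
      have hvq : v q = false := by
        have : (q, true) ∉ E := fun h => hq (hEH _ h)
        simp [hv, Ne.symm htq, this]
      have hmod : Models Φ v := by
        intro χ hχ
        rcases hclass χ hχ with ⟨h, hhH, rfl⟩ | ⟨h, hhH, rfl⟩ | rfl | rfl
        · have hht : h ≠ t := fun e => htH (e ▸ hhH)
          have : (h, true) ∈ E := (hmemE h true).2 ⟨hhH, hχ⟩
          simp only [clauseOf_true, PropForm.eval]
          simp [hv, hht, this]
        · have hht : h ≠ t := fun e => htH (e ▸ hhH)
          have : (h, true) ∉ E := by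
            intro hmem
            exact hconf h ((hmemE h true).1 hmem).2 hχ
          simp only [clauseOf_false, PropForm.eval]
          simp [hv, hht, this, hvf]
        · exact absurd hχ hφΦ
        · simp only [hψdef, PropForm.eval]
          simp [hvs, hvq]
      have := hΦent v hmod
      simp [hαdef, PropForm.eval, hvs, hvt, hvf] at this
    -- a witness for consistency of φ ∧ E
    have hss : Φ \ {ψ} ⊂ Φ :=
      (Set.ssubset_iff_of_subset Set.diff_subset).2 ⟨ψ, hψΦ, by simp⟩
    have hne := hΦmin _ hss
    rw [Entails] at hne
    push_neg at hne
    obtain ⟨v1, hv1mod, hv1α⟩ := hne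
    simp only [hαdef, PropForm.eval] at hv1α
    have hv1s : v1 s = false := by
      cases h' : v1 s
      · rfl
      · simp [h'] at hv1α
    have hv1t : v1 t = true := by
      cases h' : v1 t
      · simp [h'] at hv1α
      · rfl
    have hv1f : v1 f = false := by
      cases h' : v1 f
      · rfl
      · simp [h'] at hv1α
    have hv1φ : PropForm.eval v1 φ = true :=
      hv1mod φ ⟨hφΦ, by simpa using hφψ⟩
    have hv1E : ∀ l ∈ E, v1 l.1 = l.2 := by
      rintro ⟨h, b⟩ hl
      have hΦm : clauseOf t f (h, b) ∈ Φ := ((hmemE h b).1 hl).2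
      have hneq : clauseOf t f (h, b) ≠ ψ := by
        cases b <;> simp [hψdef]
      have hev := hv1mod _ ⟨hΦm, by simpa using hneq⟩
      cases b
      · simp only [clauseOf_false, PropForm.eval] at hev
        simp [hv1f] at hev
        simpa using hev
      · simp only [clauseOf_true, PropForm.eval] at hev
        simp [hv1t] at hev
        simpa using hev
    refine ⟨E, hEH, ⟨v1, hv1φ, hv1E⟩, ?_⟩
    -- entailment of q
    intro v hvφ hvE
    set w : ℕ → Bool := fun y => if y = s then v q else if y = t then true
      else if y = f then false else v y with hw
    have hwq : w q = v q := by
      simp [hw, Ne.symm hsq, Ne.symm htq, Ne.symm hfq]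
    have hws : w s = v q := by simp [hw]
    have hwt : w t = true := by simp [hw, Ne.symm hst]
    have hwf : w f = false := by simp [hw, Ne.symm hsf, Ne.symm htf]
    have hmod : Models Φ w := by
      intro χ hχ
      rcases hclass χ hχ with ⟨h, hhH, rfl⟩ | ⟨h, hhH, rfl⟩ | rfl | rfl
      · have hhs : h ≠ s := fun e => hsH (e ▸ hhH)
        have hht : h ≠ t := fun e => htH (e ▸ hhH)
        have hhf : h ≠ f := fun e => hfH (e ▸ hhH)
        have hmem : (h, true) ∈ E := (hmemE h true).2 ⟨hhH, hχ⟩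
        have := hvE _ hmem
        simp at this
        simp only [clauseOf_true, PropForm.eval]
        simp [hw, hhs, hht, hhf, this]
      · have hhs : h ≠ s := fun e => hsH (e ▸ hhH)
        have hht : h ≠ t := fun e => htH (e ▸ hhH)
        have hhf : h ≠ f := fun e => hfH (e ▸ hhH)
        have hmem : (h, false) ∈ E := (hmemE h false).2 ⟨hhH, hχ⟩
        have := hvE _ hmem
        simp at this
        simp only [clauseOf_false, PropForm.eval]
        simp [hw, hhs, hht, hhf, this]
      · rw [eval_congr _ v]
        · exact hvφ
        · intro x hx
          have hxs : x ≠ s := fun e => hs (e ▸ hx)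
          have hxt : x ≠ t := fun e => ht (e ▸ hx)
          have hxf : x ≠ f := fun e => hf (e ▸ hx)
          simp [hw, hxs, hxt, hxf]
      · simp only [hψdef, PropForm.eval]
        rw [hws, hwq]
        cases v q <;> simp
    have := hΦent w hmod
    simp only [hαdef, PropForm.eval] at this
    rw [hws, hwt, hwf] at this
    simpa using this
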